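/- If a family 𝔉 of languages over A is closed under binary intersections and under inverse images of monoid morphisms A* → A*, and L₁, L₂ ∈ 𝔉 use disjoint subalphabets, then L₁ ⧢ L₂ ∈ 𝔉. -/

import Mathlib

open List

variable {A : Type*}

/-- Extract the subword of `x` at positions `K`. -/
def extractW (x : List A) (K : Finset (Fin x.length)) : List A :=
  ((List.finRange x.length).filter (fun i => i ∈ K)).map x.get

/-- `InterpW C u v x` : `x` is a shuffle of `u` and `v` with possible sharing of letters in `C`. -/
def InterpW (C : Set A) (u v x : List A) : Prop :=
  ∃ K K' : Finset (Fin x.length), K ∪ K' = Finset.univ ∧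
    extractW x K = u ∧ extractW x K' = v ∧ ∀ a ∈ extractW x (K ∩ K'), a ∈ C

/-- Interpolation product of languages. -/
def interpL (C : Set A) (L L' : Set (List A)) : Set (List A) :=
  {x | ∃ u ∈ L, ∃ v ∈ L', InterpW C u v x}

/-- Shuffle product of languages. -/
def shuffleL (L L' : Set (List A)) : Set (List A) := interpL ∅ L L'

/-- Simon's congruence: same scattered subwords of length at most `k`. -/
def SimK (k : ℕ) (u v : List A) : Prop :=
  ∀ w : List A, w.length ≤ k → (w.Sublist u ↔ w.Sublist v)

/-- Piecewise-testability: union of `∼ₖ`-classes for some `k`. -/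
def PT (L : Set (List A)) : Prop :=
  ∃ k, ∀ u v : List A, SimK k u v → (u ∈ L ↔ v ∈ L)


lemma mem_extractW {A : Type*} {x : List A} {K : Finset (Fin x.length)} {i : Fin x.length}
    (hi : i ∈ K) : x.get i ∈ extractW x K := by
  apply List.mem_map_of_mem
  simp [List.mem_filter, List.mem_finRange, hi]

lemma exists_of_mem_extractW {A : Type*} {x : List A} {K : Finset (Fin x.length)} {a : A}
    (ha : a ∈ extractW x K) : ∃ i ∈ K, x.get i = a := by
  rcases List.mem_map.mp ha with ⟨i, hi, rfl⟩
  exact ⟨i, by simpa using (List.mem_filter.mp hi).2, rfl⟩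

lemma extractW_eq_filter {A : Type*} (x : List A) (p : A → Bool)
    (K : Finset (Fin x.length)) (hK : ∀ i, i ∈ K ↔ p (x.get i)) :
    extractW x K = x.filter p := by
  unfold extractW
  conv_rhs => rw [← List.map_get_finRange x]
  rw [List.filter_map]
  exact congrArg _ (List.filter_congr (fun i _ => by simp [hK i]))

/-- A DFA is acyclic when every cycle is a self-loop. -/
def DFA.Acyclic {σ : Type*} (M : DFA A σ) : Prop :=
  ∀ p q (u v : List A), M.evalFrom p u = q → M.evalFrom q v = p → p = q

/-- A language is ℛ-trivial iff it is recognized by a finite acyclic DFA. -/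
def RTrivial (L : Set (List A)) : Prop :=
  ∃ (σ : Type) (_ : Fintype σ) (M : DFA A σ), M.Acyclic ∧ ∀ x, x ∈ M.accepts ↔ x ∈ L

theorem stmt9 {A : Type*} (F : Set (Set (List A)))
    (hcap : ∀ L L', L ∈ F → L' ∈ F → L ∩ L' ∈ F)
    (hmor : ∀ f : List A → List A, f [] = [] →
      (∀ x y : List A, f (x ++ y) = f x ++ f y) → ∀ L ∈ F, f ⁻¹' L ∈ F)
    (L₁ L₂ : Set (List A)) (hF₁ : L₁ ∈ F) (hF₂ : L₂ ∈ F)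
    (A₁ A₂ : Set A) (hdisj : Disjoint A₁ A₂)
    (h₁ : ∀ w ∈ L₁, ∀ a ∈ w, a ∈ A₁) (h₂ : ∀ w ∈ L₂, ∀ a ∈ w, a ∈ A₂) :
    shuffleL L₁ L₂ ∈ F := by
  classical
  set p₁ : A → Bool := fun a => decide (a ∉ A₂) with hp₁
  set p₂ : A → Bool := fun a => decide (a ∉ A₁) with hp₂
  have hmain : shuffleL L₁ L₂ =
      (fun x => x.filter p₁) ⁻¹' L₁ ∩ (fun x => x.filter p₂) ⁻¹' L₂ := by
    ext x
    constructor
    · rintro ⟨u, hu, v, hv, K, K', hunion, hKu, hKv, -⟩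
      have hmemK : ∀ i, i ∈ K → x.get i ∈ A₁ := fun i hi =>
        h₁ u hu _ (hKu ▸ mem_extractW hi)
      have hmemK' : ∀ i, i ∈ K' → x.get i ∈ A₂ := fun i hi =>
        h₂ v hv _ (hKv ▸ mem_extractW hi)
      have hcover : ∀ i : Fin x.length, i ∈ K ∨ i ∈ K' := by
        intro i
        have : i ∈ K ∪ K' := hunion ▸ Finset.mem_univ i
        exact Finset.mem_union.mp this
      constructor
      · show x.filter p₁ ∈ L₁
        have hKchar : ∀ i, i ∈ K ↔ p₁ (x.get i) := by
          intro i
          simp only [hp₁, decide_eq_true_eq]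
          constructor
          · exact fun hi => Set.disjoint_left.mp hdisj (hmemK i hi)
          · intro hni
            rcases hcover i with h | h
            · exact h
            · exact absurd (hmemK' i h) hni
        rw [← extractW_eq_filter x p₁ K hKchar]
        exact hKu ▸ hu
      · show x.filter p₂ ∈ L₂
        have hKchar : ∀ i, i ∈ K' ↔ p₂ (x.get i) := by
          intro i
          simp only [hp₂, decide_eq_true_eq]
          constructor
          · exact fun hi => Set.disjoint_right.mp hdisj (hmemK' i hi)
          · intro hni
            rcases hcover i with h | h
            · exact absurd (hmemK i h) hni
            · exact h
        rw [← extractW_eq_filter x p₂ K' hKchar]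
        exact hKv ▸ hv
    · rintro ⟨hu, hv⟩
      refine ⟨x.filter p₁, hu, x.filter p₂, hv, ?_⟩
      refine ⟨Finset.univ.filter (fun i => p₁ (x.get i)),
        Finset.univ.filter (fun i => p₂ (x.get i)), ?_, ?_, ?_, ?_⟩
      · ext i
        simp only [Finset.mem_union, Finset.mem_filter, Finset.mem_univ, true_and,
          Finset.mem_univ, iff_true, hp₁, hp₂, decide_eq_true_eq]
        by_cases h : x.get i ∈ A₁
        · exact Or.inl (Set.disjoint_left.mp hdisj h)
        · exact Or.inr h
      · exact extractW_eq_filter x p₁ _ (fun i => by simp)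
      · exact extractW_eq_filter x p₂ _ (fun i => by simp)
      · intro a ha
        exfalso
        rcases exists_of_mem_extractW ha with ⟨i, hi, rfl⟩
        simp only [Finset.mem_inter, Finset.mem_filter, Finset.mem_univ, true_and,
          hp₁, hp₂, decide_eq_true_eq] at hi
        have hK1 : (i : Fin x.length) ∈ Finset.univ.filter (fun i => p₁ (x.get i)) := by
          simpa [hp₁] using hi.1
        have : x.get i ∈ extractW x (Finset.univ.filter (fun i => p₁ (x.get i))) :=
          mem_extractW hK1
        rw [extractW_eq_filter x p₁ _ (fun i => by simp)] at this
        exact hi.2 (h₁ _ hu _ this)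
  rw [hmain]
  exact hcap _ _
    (hmor _ rfl (fun a b => List.filter_append a b) _ hF₁)
    (hmor _ rfl (fun a b => List.filter_append a b) _ hF₂)
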